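/- Let {L₀, L₁} be a Δ-coherent pair of the second kind with MOPs {P_n^{(0)}}, {P_n^{(1)}}, normalizations h_n^{(0)}, h_n^{(1)}, and coherence coefficients τ_n. For i = 0, 1 define the linear functionals v_n^{(i)} = (P_n^{(i)}/h_n^{(i)}) L_i, i.e., v_n^{(i)}[p] = L_i[P_n^{(i)} p]/h_n^{(i)}. Then for every n ∈ ℕ₀, Δ* v_n^{(1)} = τ_{n+1}(n+2) v_{n+2}^{(0)} − (n+1) v_{n+1}^{(0)}; equivalently, for every p ∈ ℂ[x], −L₁[P_n^{(1)}·Δp]/h_n^{(1)} = τ_{n+1}(n+2) L₀[P_{n+2}^{(0)} p]/h_{n+2}^{(0)} − (n+1) L₀[P_{n+1}^{(0)} p]/h_{n+1}^{(0)}. -/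

import Mathlib

open Polynomial

/-- The forward difference of a polynomial: `(Δp)(x) = p(x+1) − p(x)`. -/
noncomputable def polyDelta (p : Polynomial ℂ) : Polynomial ℂ :=
  p.comp (X + C 1) - p

lemma polyDelta_add (p q : Polynomial ℂ) :
    polyDelta (p + q) = polyDelta p + polyDelta q := by
  simp only [polyDelta, add_comp]; ring

lemma polyDelta_Cmul (c : ℂ) (p : Polynomial ℂ) :
    polyDelta (C c * p) = C c * polyDelta p := by
  simp only [polyDelta, mul_comp, C_comp]; ring

lemma lin_Cmul (L : Polynomial ℂ →ₗ[ℂ] ℂ) (c : ℂ) (q : Polynomial ℂ) :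
    L (C c * q) = c * L q := by
  rw [← Polynomial.smul_eq_C_mul, map_smul, smul_eq_mul]

/-- If `{L₀, L₁}` is a `Δ`-coherent pair of the second kind with MOPs `{P_n^{(0)}}`,
`{P_n^{(1)}}`, normalizations `h_n^{(0)}`, `h_n^{(1)}` and coherence coefficients
`τ_n`, then the dual functionals `v_n^{(i)} = (P_n^{(i)}/h_n^{(i)}) L_i` satisfy
`Δ* v_n^{(1)} = τ_{n+1}(n+2) v_{n+2}^{(0)} − (n+1) v_{n+1}^{(0)}` for all `n ∈ ℕ₀`. -/
theorem dual_functional_relation (L₀ L₁ : Polynomial ℂ →ₗ[ℂ] ℂ)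
    (P₀ P₁ : ℕ → Polynomial ℂ) (h₀ h₁ : ℕ → ℂ) (τ : ℕ → ℂ)
    (hmonic₀ : ∀ n, (P₀ n).Monic) (hdeg₀ : ∀ n, (P₀ n).natDegree = n)
    (hmonic₁ : ∀ n, (P₁ n).Monic) (hdeg₁ : ∀ n, (P₁ n).natDegree = n)
    (hh₀ : ∀ n, h₀ n ≠ 0) (hh₁ : ∀ n, h₁ n ≠ 0)
    (horth₀ : ∀ k n, L₀ (P₀ k * P₀ n) = if k = n then h₀ n else 0)
    (horth₁ : ∀ k n, L₁ (P₁ k * P₁ n) = if k = n then h₁ n else 0)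
    (hτ : ∀ n : ℕ, 1 ≤ n → τ n ≠ 0)
    (hcoh : ∀ n : ℕ, 1 ≤ n →
      polyDelta (P₀ (n + 1)) = C ((n : ℂ) + 1) * (P₁ n - C (τ n) * P₁ (n - 1))) :
    ∀ (n : ℕ) (p : Polynomial ℂ),
      -(L₁ (P₁ n * polyDelta p)) / h₁ n =
        τ (n + 1) * ((n : ℂ) + 2) * L₀ (P₀ (n + 2) * p) / h₀ (n + 2) -
          ((n : ℂ) + 1) * L₀ (P₀ (n + 1) * p) / h₀ (n + 1) := by
  intro n
  -- the statement as a predicate on `p`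
  set S : Polynomial ℂ → Prop := fun p =>
      -(L₁ (P₁ n * polyDelta p)) / h₁ n =
        τ (n + 1) * ((n : ℂ) + 2) * L₀ (P₀ (n + 2) * p) / h₀ (n + 2) -
          ((n : ℂ) + 1) * L₀ (P₀ (n + 1) * p) / h₀ (n + 1) with hS
  show ∀ p, S p
  have hP₀0 : P₀ 0 = 1 := ((hmonic₀ 0).natDegree_eq_zero).mp (hdeg₀ 0)
  have hP₁0 : P₁ 0 = 1 := ((hmonic₁ 0).natDegree_eq_zero).mp (hdeg₁ 0)
  -- the statement is additive
  have Sadd : ∀ p q, S p → S q → S (p + q) := by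
    intro p q hp hq
    simp only [hS] at hp hq ⊢
    simp only [polyDelta_add, mul_add, map_add]
    linear_combination hp + hq
  -- the statement is stable under scalar multiples
  have Ssmul : ∀ (c : ℂ) p, S p → S (C c * p) := by
    intro c p hp
    simp only [hS] at hp ⊢
    rw [polyDelta_Cmul, mul_left_comm (P₁ n), mul_left_comm (P₀ (n+2)),
      mul_left_comm (P₀ (n+1)), lin_Cmul, lin_Cmul, lin_Cmul]
    linear_combination c * hp
  -- the statement on the basis elements `P₀ m`
  have Sbasis : ∀ m, S (P₀ m) := by
    intro m
    simp only [hS]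
    match m with
    | 0 =>
      have hΔ : polyDelta (P₀ 0) = 0 := by simp [hP₀0, polyDelta]
      rw [hΔ, mul_zero, map_zero, horth₀, horth₀]
      have : ¬ (n + 2 = 0) := by omega
      have : ¬ (n + 1 = 0) := by omega
      simp_all
    | 1 =>
      have hc1 : (P₀ 1).coeff 1 = 1 := by
        have := (hmonic₀ 1).leadingCoeff
        rwa [Polynomial.leadingCoeff, hdeg₀ 1] at this
      have hrep : P₀ 1 = C ((P₀ 1).coeff 1) * X + C ((P₀ 1).coeff 0) :=
        (P₀ 1).eq_X_add_C_of_natDegree_le_one (le_of_eq (hdeg₀ 1))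
      have hΔ : polyDelta (P₀ 1) = 1 := by
        rw [hrep, hc1]
        simp only [polyDelta, add_comp, mul_comp, C_comp, X_comp, map_one, one_mul]
        ring
      rw [hΔ, ← hP₁0, horth₁, horth₀, horth₀]
      have h2 : ¬ (n + 2 = 1) := by omega
      by_cases hn : n = 0
      · subst hn
        simp only [if_pos rfl, h2, if_neg, if_pos, ite_true, ite_false]
        field_simp [hh₁ 0, hh₀ 1]
        ring
      · have h1 : ¬ (n + 1 = 1) := by omega
        simp [hn, h1, h2]
    | (k+2) =>
      have hco := hcoh (k + 1) (by omega)
      have hk1 : k + 1 - 1 = k := by omega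
      rw [hk1] at hco
      have h2 : ((k : ℂ) + 1 + 1) = ((k : ℂ) + 2) := by ring
      rw [Nat.cast_add, Nat.cast_one, h2] at hco
      have hΔ : P₁ n * polyDelta (P₀ (k + 2)) =
          C ((k : ℂ) + 2) * (P₁ n * P₁ (k+1)) -
            C (((k : ℂ) + 2) * τ (k+1)) * (P₁ n * P₁ k) := by
        rw [hco, map_mul]; ring
      rw [hΔ, map_sub, lin_Cmul, lin_Cmul, horth₁, horth₁, horth₀, horth₀]
      by_cases hnk : n = k
      · subst hnk
        have hne : ¬ (n = n + 1) := by omega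
        have he2 : n + 2 = n + 2 := rfl
        have hne1 : ¬ (n + 1 = n + 2) := by omega
        simp only [hne, if_neg, if_pos rfl, hne1, ite_true, ite_false]
        field_simp [hh₁ n, hh₀ (n+2), hh₀ (n+1)]
        ring
      · by_cases hnk1 : n = k + 1
        · subst hnk1
          have hne : ¬ (k + 1 = k) := by omega
          have hne2 : ¬ (k + 1 + 2 = k + 2) := by omega
          have he1 : k + 1 + 1 = k + 2 := by omega
          simp only [if_pos rfl, hne, if_neg, hne2, he1]
          push_cast
          field_simp [hh₁ (k+1), hh₀ (k+2), hh₀ (k+3)]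
          ring
        · have a1 : ¬ (n + 2 = k + 2) := by omega
          have a2 : ¬ (n + 1 = k + 2) := by omega
          simp [hnk, hnk1, a1, a2]
  -- extend to all polynomials by induction on the degree
  have main : ∀ (N : ℕ) (q : Polynomial ℂ), q.natDegree ≤ N → S q := by
    intro N
    induction N with
    | zero =>
      intro q hq
      have : q = C (q.coeff 0) * P₀ 0 := by
        rw [hP₀0, mul_one]
        exact (Polynomial.eq_C_of_natDegree_le_zero hq)
      rw [this]
      exact Ssmul _ _ (Sbasis 0)
    | succ N ih =>
      intro q hq
      by_cases hle : q.natDegree ≤ N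
      · exact ih q hle
      have hdq : q.natDegree = N + 1 := le_antisymm hq (by omega)
      set r := q - C q.leadingCoeff * P₀ (N + 1) with hr
      have hrdeg : r.natDegree ≤ N := by
        rw [Polynomial.natDegree_le_iff_coeff_eq_zero]
        intro M hM
        simp only [hr, Polynomial.coeff_sub, Polynomial.coeff_C_mul]
        rcases eq_or_lt_of_le (Nat.succ_le_of_lt hM) with hMe | hMl
        · rw [← hMe]
          have hq1 : (P₀ (N+1)).coeff (N+1) = 1 := by
            have := (hmonic₀ (N+1)).leadingCoeff
            rwa [Polynomial.leadingCoeff, hdeg₀ (N+1)] at this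
          rw [hq1, mul_one, Polynomial.leadingCoeff, hdq]
          ring
        · have e1 : q.coeff M = 0 :=
            Polynomial.coeff_eq_zero_of_natDegree_lt (by omega)
          have e2 : (P₀ (N+1)).coeff M = 0 :=
            Polynomial.coeff_eq_zero_of_natDegree_lt (by rw [hdeg₀]; omega)
          rw [e1, e2]; ring
      have hdecomp : q = C q.leadingCoeff * P₀ (N + 1) + r := by
        rw [hr]; ring
      rw [hdecomp]
      exact Sadd _ _ (Ssmul _ _ (Sbasis (N + 1))) (ih r hrdeg)
  exact fun p => main p.natDegree p le_rfl
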